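/- Let H be a separable Hilbert space and Y = ∑_n ξ_n v_n a series of independent, symmetric Gaussian random elements ξ_n v_n in H with v_n pairwise orthogonal. Then the series converges almost surely in H if and only if ∑_n E|ξ_n|² ‖v_n‖² < ∞, i.e. if and only if E‖Y‖² < ∞. -/

import Mathlib

open MeasureTheory Filter Topology ProbabilityTheory Real
open scoped ENNReal NNReal

section Hilbert
variable {H : Type*} [NormedAddCommGroup H] [InnerProductSpace ℝ H]

lemma aux_pythagoras (v : ℕ → H) (horth : ∀ m n : ℕ, m ≠ n → (inner ℝ (v m) (v n) : ℝ) = 0)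
    (a : ℕ → ℝ) (s : Finset ℕ) :
    ‖∑ n ∈ s, a n • v n‖ ^ 2 = ∑ n ∈ s, a n ^ 2 * ‖v n‖ ^ 2 := by
  rw [← real_inner_self_eq_norm_sq, sum_inner]
  refine Finset.sum_congr rfl fun i hi => ?_
  rw [inner_sum, Finset.sum_eq_single_of_mem i hi]
  · rw [real_inner_smul_left, real_inner_smul_right, real_inner_self_eq_norm_sq]; ring
  · intro j hj hji
    rw [real_inner_smul_left, real_inner_smul_right, horth i j (Ne.symm hji)]
    ring

lemma aux_conv_iff [CompleteSpace H] (v : ℕ → H)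
    (horth : ∀ m n : ℕ, m ≠ n → (inner ℝ (v m) (v n) : ℝ) = 0) (a : ℕ → ℝ) :
    (∃ L : H, Tendsto (fun N : ℕ => ∑ n ∈ Finset.range N, a n • v n) atTop (𝓝 L)) ↔
      Summable (fun n : ℕ => a n ^ 2 * ‖v n‖ ^ 2) := by
  constructor
  · rintro ⟨L, hL⟩
    have hc := hL.cauchySeq
    rw [Metric.cauchySeq_iff'] at hc
    obtain ⟨N₀, hN₀⟩ := hc 1 one_pos
    refine summable_of_sum_range_le (c := (∑ n ∈ Finset.range N₀, a n ^ 2 * ‖v n‖ ^ 2) + 1)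
      (fun n => by positivity) fun N => ?_
    rcases le_total N N₀ with h | h
    · have : ∑ n ∈ Finset.range N, a n ^ 2 * ‖v n‖ ^ 2
          ≤ ∑ n ∈ Finset.range N₀, a n ^ 2 * ‖v n‖ ^ 2 :=
        Finset.sum_le_sum_of_subset_of_nonneg (Finset.range_subset_range.2 h)
          (fun i _ _ => by positivity)
      linarith
    · have h1 := hN₀ N h
      rw [dist_eq_norm] at h1
      have h2 : (∑ n ∈ Finset.range N, a n • v n) - ∑ n ∈ Finset.range N₀, a n • v n
          = ∑ n ∈ Finset.Ico N₀ N, a n • v n := (Finset.sum_Ico_eq_sub _ h).symm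
      have h3 : ‖∑ n ∈ Finset.Ico N₀ N, a n • v n‖ ^ 2
          = ∑ n ∈ Finset.Ico N₀ N, a n ^ 2 * ‖v n‖ ^ 2 := aux_pythagoras v horth a _
      have h4 : ∑ n ∈ Finset.Ico N₀ N, a n ^ 2 * ‖v n‖ ^ 2
          = (∑ n ∈ Finset.range N, a n ^ 2 * ‖v n‖ ^ 2)
            - ∑ n ∈ Finset.range N₀, a n ^ 2 * ‖v n‖ ^ 2 :=
        Finset.sum_Ico_eq_sub _ h
      have h5 : ‖∑ n ∈ Finset.Ico N₀ N, a n • v n‖ < 1 := by rwa [← h2]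
      have h6 : ‖∑ n ∈ Finset.Ico N₀ N, a n • v n‖ ^ 2 < 1 := by
        nlinarith [norm_nonneg (∑ n ∈ Finset.Ico N₀ N, a n • v n)]
      linarith [h3 ▸ h6, h4]
  · intro hsum
    have hS : Summable (fun n => a n • v n) := by
      rw [summable_iff_vanishing]
      intro e he
      obtain ⟨ε, hε, hball⟩ := Metric.mem_nhds_iff.1 he
      have := (summable_iff_vanishing.1 hsum) (Metric.ball 0 (ε ^ 2))
        (Metric.ball_mem_nhds 0 (by positivity))
      obtain ⟨s, hs⟩ := this
      refine ⟨s, fun t ht => ?_⟩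
      apply hball
      have h1 := hs t ht
      rw [Metric.mem_ball, dist_zero_right, Real.norm_eq_abs] at h1
      have h2 : ‖∑ n ∈ t, a n • v n‖ ^ 2 = ∑ n ∈ t, a n ^ 2 * ‖v n‖ ^ 2 :=
        aux_pythagoras v horth a t
      have h3 : ∑ n ∈ t, a n ^ 2 * ‖v n‖ ^ 2 < ε ^ 2 := lt_of_abs_lt h1
      rw [Metric.mem_ball, dist_zero_right]
      nlinarith [norm_nonneg (∑ n ∈ t, a n • v n)]
    exact ⟨_, hS.hasSum.tendsto_sum_nat⟩

end Hilbert
-- bounded measurable functions are integrable on probability spaces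
lemma aux_integrable {α : Type*} [MeasurableSpace α] (μ : Measure α) [IsFiniteMeasure μ]
    {f : α → ℝ} (hf : Measurable f) {C : ℝ} (h : ∀ x, |f x| ≤ C) : Integrable f μ :=
  Integrable.mono' (integrable_const C) hf.aestronglyMeasurable (ae_of_all _ h)

lemma aux_exp_le {t : ℝ} (ht : 0 ≤ t) :
    Real.exp (-t) ≤ 1 - (1 - Real.exp (-1)) * min t 1 := by
  rcases le_total t 1 with h | h
  · rw [min_eq_left h]
    have hcvx := convexOn_exp.2 (Set.mem_univ (0:ℝ)) (Set.mem_univ (-1:ℝ))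
      (by linarith : (0:ℝ) ≤ 1 - t) ht (by ring)
    simp only [smul_eq_mul, mul_zero, zero_add, mul_neg, mul_one, Real.exp_zero] at hcvx
    calc Real.exp (-t) = Real.exp ((1-t) * 0 + t * (-1)) := by ring_nf
    _ ≤ (1-t) * Real.exp 0 + t * Real.exp (-1) := convexOn_exp.2 (Set.mem_univ (0:ℝ))
        (Set.mem_univ (-1:ℝ)) (by linarith : (0:ℝ) ≤ 1 - t) ht (by ring)
    _ = 1 - (1 - Real.exp (-1)) * t := by rw [Real.exp_zero]; ring
  · rw [min_eq_right h]
    have : Real.exp (-t) ≤ Real.exp (-1) := Real.exp_le_exp.2 (by linarith)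
    linarith

lemma aux_min_mul {a b : ℝ} (ha : 0 ≤ a) (hb : 0 ≤ b) :
    min a 1 * min b 1 ≤ min (a * b) 1 := by
  rcases le_total a 1 with h1 | h1 <;> rcases le_total b 1 with h2 | h2
  · rw [min_eq_left h1, min_eq_left h2, min_eq_left (by nlinarith)]
  · rw [min_eq_left h1, min_eq_right h2, mul_one]
    exact le_min (by nlinarith) h1
  · rw [min_eq_right h1, min_eq_left h2, one_mul]
    exact le_min (by nlinarith) h2
  · rw [min_eq_right h1, min_eq_right h2, min_eq_right (by nlinarith)]; norm_num

noncomputable def auxκ₀ : ℝ := ∫ y, min (y ^ 2) 1 ∂(gaussianReal 0 1)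

lemma aux_meas_min (c : ℝ) : Measurable (fun x : ℝ => min (c * x ^ 2) 1) :=
  ((measurable_const.mul ((measurable_id.pow_const 2))).min measurable_const)

lemma auxκ₀_pos : 0 < auxκ₀ := by
  have hint : Integrable (fun y : ℝ => min (y ^ 2) 1) (gaussianReal 0 1) := by
    refine aux_integrable _ (by simpa using aux_meas_min 1) (C := 1) fun x => ?_
    rw [abs_of_nonneg (le_min (sq_nonneg x) one_pos.le)]
    exact min_le_right _ _
  rw [auxκ₀, integral_pos_iff_support_of_nonneg_ae
    (ae_of_all _ fun x => le_min (sq_nonneg x) one_pos.le) hint]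
  have hsupp : Function.support (fun y : ℝ => min (y ^ 2) 1) = {0}ᶜ := by
    ext y
    simp only [Function.mem_support, Set.mem_compl_iff, Set.mem_singleton_iff]
    constructor
    · rintro h rfl; simp at h
    · intro h hmin
      have h2 : (0:ℝ) < min (y ^ 2) 1 := lt_min (by positivity) one_pos
      exact absurd hmin h2.ne'
  rw [hsupp]
  have h0 : (gaussianReal 0 1) {(0:ℝ)} = 0 :=
    gaussianReal_absolutelyContinuous 0 one_ne_zero (measure_singleton 0)
  have : (gaussianReal 0 1) {(0:ℝ)}ᶜ = 1 := by
    rw [measure_compl (measurableSet_singleton 0) (measure_ne_top _ _), h0, measure_univ]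
    simp
  rw [this]; norm_num

lemma aux_gauss_map (σ : ℝ≥0) :
    Measure.map (fun y => Real.sqrt σ * y) (gaussianReal 0 1) = gaussianReal 0 σ := by
  have := gaussianReal_map_const_mul (μ := 0) (v := 1) (Real.sqrt σ)
  have h2 : (⟨(Real.sqrt σ) ^ 2, sq_nonneg _⟩ : ℝ≥0) * 1 = σ := by
    ext; simp [Real.sq_sqrt σ.2]
  simpa [h2] using this

noncomputable def auxκ : ℝ := (1 - Real.exp (-1)) * auxκ₀

lemma auxκ_pos : 0 < auxκ := by
  have : Real.exp (-1) < 1 := Real.exp_lt_one_iff.2 (by norm_num)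
  exact mul_pos (by linarith) auxκ₀_pos

lemma aux_moment {c : ℝ} (hc : 0 ≤ c) (σ : ℝ≥0) :
    ∫ x, Real.exp (-(c * x ^ 2)) ∂(gaussianReal 0 σ) ≤
      Real.exp (-(auxκ * min (c * σ) 1)) := by
  have hmeas_exp : Measurable (fun x : ℝ => Real.exp (-(c * x ^ 2))) :=
    ((measurable_const.mul (measurable_id.pow_const 2)).neg).exp
  have hint_exp : Integrable (fun x : ℝ => Real.exp (-(c * x ^ 2))) (gaussianReal 0 σ) := by
    refine aux_integrable _ hmeas_exp (C := 1) fun x => ?_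
    rw [abs_of_nonneg (Real.exp_pos _).le]
    exact Real.exp_le_one_iff.2 (neg_nonpos.2 (by positivity))
  have hint_min : Integrable (fun x : ℝ => min (c * x ^ 2) 1) (gaussianReal 0 σ) := by
    refine aux_integrable _ (aux_meas_min c) (C := 1) fun x => ?_
    rw [abs_of_nonneg (le_min (by positivity) one_pos.le)]
    exact min_le_right _ _
  -- Step 1: exp bound
  have step1 : ∫ x, Real.exp (-(c * x ^ 2)) ∂(gaussianReal 0 σ)
      ≤ 1 - (1 - Real.exp (-1)) * ∫ x, min (c * x ^ 2) 1 ∂(gaussianReal 0 σ) := by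
    have : ∫ x, Real.exp (-(c * x ^ 2)) ∂(gaussianReal 0 σ)
        ≤ ∫ x, (1 - (1 - Real.exp (-1)) * min (c * x ^ 2) 1) ∂(gaussianReal 0 σ) := by
      refine integral_mono hint_exp ?_ fun x => aux_exp_le (t := c * x ^ 2) (by positivity)
      exact (integrable_const 1).sub (hint_min.const_mul _)
    rwa [integral_sub (integrable_const 1) (hint_min.const_mul _), integral_const,
      probReal_univ, one_smul, integral_const_mul] at this
  -- Step 2: lower bound on ∫ min
  have step2 : min ((c : ℝ) * σ) 1 * auxκ₀ ≤ ∫ x, min (c * x ^ 2) 1 ∂(gaussianReal 0 σ) := by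
    by_cases hσ : σ = 0
    · subst hσ
      simp only [NNReal.coe_zero, mul_zero]
      rw [min_eq_left (by norm_num : (0:ℝ) ≤ 1), zero_mul]
      exact integral_nonneg fun x => le_min (by positivity) one_pos.le
    · rw [← aux_gauss_map σ, integral_map (by fun_prop) (aux_meas_min c).aestronglyMeasurable]
      have heq : ∀ y : ℝ, min (c * (Real.sqrt σ * y) ^ 2) 1 = min ((c * σ) * y ^ 2) 1 := by
        intro y
        rw [mul_pow]
        have hs : Real.sqrt (σ:ℝ) ^ 2 = (σ:ℝ) := Real.sq_sqrt σ.coe_nonneg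
        rw [hs]
        ring_nf
      simp only [heq]
      have hmono : ∀ y : ℝ, min ((c:ℝ) * σ) 1 * min (y ^ 2) 1 ≤ min ((c * σ) * y ^ 2) 1 :=
        fun y => aux_min_mul (by positivity) (sq_nonneg y)
      calc min ((c:ℝ) * σ) 1 * auxκ₀
          = ∫ y, min ((c:ℝ) * σ) 1 * min (y ^ 2) 1 ∂(gaussianReal 0 1) := by
            rw [auxκ₀, integral_const_mul]
        _ ≤ ∫ y, min ((c * σ) * y ^ 2) 1 ∂(gaussianReal 0 1) := by
            refine integral_mono ?_ ?_ hmono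
            · exact (aux_integrable _ (by simpa using aux_meas_min 1) (C := 1) fun x => by
                rw [abs_of_nonneg (le_min (sq_nonneg x) one_pos.le)]
                exact min_le_right _ _).const_mul _
            · exact aux_integrable _ (aux_meas_min _) (C := 1) fun x => by
                rw [abs_of_nonneg (le_min (by positivity) one_pos.le)]
                exact min_le_right _ _
  -- combine
  have h1 : (1 - Real.exp (-1)) * (min ((c : ℝ) * σ) 1 * auxκ₀)
      ≤ (1 - Real.exp (-1)) * ∫ x, min (c * x ^ 2) 1 ∂(gaussianReal 0 σ) := by
    have : Real.exp (-1) < 1 := Real.exp_lt_one_iff.2 (by norm_num)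
    exact mul_le_mul_of_nonneg_left step2 (by linarith)
  have h2 : 1 - auxκ * min ((c:ℝ) * σ) 1 ≤ Real.exp (-(auxκ * min ((c:ℝ) * σ) 1)) := by
    have := Real.add_one_le_exp (-(auxκ * min ((c:ℝ) * σ) 1))
    linarith
  calc ∫ x, Real.exp (-(c * x ^ 2)) ∂(gaussianReal 0 σ)
      ≤ 1 - (1 - Real.exp (-1)) * ∫ x, min (c * x ^ 2) 1 ∂(gaussianReal 0 σ) := step1
    _ ≤ 1 - auxκ * min ((c:ℝ) * σ) 1 := by
        rw [auxκ]; nlinarith [h1]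
    _ ≤ Real.exp (-(auxκ * min ((c:ℝ) * σ) 1)) := h2
lemma aux_gauss_map' (σ : ℝ≥0) :
    Measure.map (fun y => Real.sqrt σ * y) (gaussianReal 0 1) = gaussianReal 0 σ := by
  have := gaussianReal_map_const_mul (μ := 0) (v := 1) (Real.sqrt σ)
  have h2 : (⟨(Real.sqrt σ) ^ 2, sq_nonneg _⟩ : ℝ≥0) * 1 = σ := by
    ext; simp [Real.sq_sqrt σ.coe_nonneg]
  simpa [h2] using this

lemma aux_hm : Measurable fun x : ℝ => ENNReal.ofReal (x ^ 2) := by fun_prop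

noncomputable def auxJ : ℝ≥0∞ := ∫⁻ x, ENNReal.ofReal (x ^ 2) ∂(gaussianReal 0 1)

lemma auxJ_lt_top : auxJ < ⊤ := by
  rw [auxJ, gaussianReal_of_var_ne_zero 0 one_ne_zero,
    lintegral_withDensity_eq_lintegral_mul _ (measurable_gaussianPDF 0 1)
      aux_hm]
  have hbound : ∀ x : ℝ, (gaussianPDF 0 1 x * ENNReal.ofReal (x ^ 2))
      ≤ ENNReal.ofReal (4 * Real.exp (-(4⁻¹) * x ^ 2)) := by
    intro x
    rw [gaussianPDF, ← ENNReal.ofReal_mul (gaussianPDFReal_nonneg _ _ _)]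
    apply ENNReal.ofReal_le_ofReal
    have hpdf : gaussianPDFReal 0 1 x ≤ Real.exp (-(x ^ 2) / 2) := by
      rw [gaussianPDFReal]
      have h1 : (1:ℝ) ≤ Real.sqrt (2 * π * (1:ℝ≥0)) := by
        rw [Real.one_le_sqrt]
        push_cast
        nlinarith [Real.pi_gt_three]
      have h2 : (Real.sqrt (2 * π * (1:ℝ≥0)))⁻¹ ≤ 1 := by
        rw [inv_le_one_iff₀]; right; exact h1
      have h3 : (0:ℝ) < Real.exp (- (x - 0)^2 / (2 * (1:ℝ≥0))) := Real.exp_pos _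
      calc (Real.sqrt (2 * π * (1:ℝ≥0)))⁻¹ * Real.exp (- (x - 0)^2 / (2 * (1:ℝ≥0)))
          ≤ 1 * Real.exp (- (x - 0)^2 / (2 * (1:ℝ≥0))) := by
            exact mul_le_mul_of_nonneg_right h2 h3.le
        _ = Real.exp (-(x ^ 2) / 2) := by norm_num
    have hx2 : x ^ 2 ≤ 4 * Real.exp (4⁻¹ * x ^ 2) := by
      have := Real.add_one_le_exp (4⁻¹ * x ^ 2)
      nlinarith [Real.exp_pos (4⁻¹ * x ^ 2)]
    calc gaussianPDFReal 0 1 x * x ^ 2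
        ≤ Real.exp (-(x ^ 2) / 2) * (4 * Real.exp (4⁻¹ * x ^ 2)) := by
          apply mul_le_mul hpdf hx2 (sq_nonneg x) (Real.exp_pos _).le
      _ = 4 * Real.exp (-(x ^ 2) / 2 + 4⁻¹ * x ^ 2) := by rw [Real.exp_add]; ring
      _ = 4 * Real.exp (-(4⁻¹) * x ^ 2) := by ring_nf
  calc ∫⁻ x, (gaussianPDF 0 1 * fun x => ENNReal.ofReal (x ^ 2)) x
      ≤ ∫⁻ x, ENNReal.ofReal (4 * Real.exp (-(4⁻¹) * x ^ 2)) := lintegral_mono hbound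
    _ < ⊤ := ((integrable_exp_neg_mul_sq (by norm_num : (0:ℝ) < 4⁻¹)).const_mul 4).lintegral_lt_top

lemma aux_lintegral_sq (σ : ℝ≥0) :
    ∫⁻ x, ENNReal.ofReal (x ^ 2) ∂(gaussianReal 0 σ) = ENNReal.ofReal σ * auxJ := by
  by_cases hσ : σ = 0
  · subst hσ
    rw [gaussianReal_zero_var, lintegral_dirac' _ aux_hm]
    simp
  · rw [← aux_gauss_map' σ, lintegral_map aux_hm
      (measurable_const_mul _)]
    have heq : ∀ y : ℝ, ENNReal.ofReal ((Real.sqrt σ * y) ^ 2)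
        = ENNReal.ofReal (σ:ℝ) * ENNReal.ofReal (y ^ 2) := by
      intro y
      rw [mul_pow]
      have hs : Real.sqrt (σ:ℝ) ^ 2 = (σ:ℝ) := Real.sq_sqrt σ.coe_nonneg
      rw [hs, ENNReal.ofReal_mul σ.coe_nonneg]
    simp only [heq]
    rw [lintegral_const_mul _ aux_hm]
    rfl

/-- Let `H` be a separable Hilbert space and `Y = ∑_n ξ_n v_n` a series of independent
centered Gaussian random elements with `v_n` pairwise orthogonal.  Then the series
converges a.s. in `H` iff `∑_n E|ξ_n|² ‖v_n‖² < ∞` (i.e. iff `E‖Y‖² < ∞`). -/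
theorem stmt_16 {Ω : Type*} [MeasureSpace Ω] [IsProbabilityMeasure (volume : Measure Ω)]
    {H : Type*} [NormedAddCommGroup H] [InnerProductSpace ℝ H] [CompleteSpace H]
    [TopologicalSpace.SeparableSpace H]
    (ξ : ℕ → Ω → ℝ) (hmeas : ∀ n, Measurable (ξ n))
    (hindep : iIndepFun ξ (volume : Measure Ω))
    (v : ℕ → H) (horth : ∀ m n : ℕ, m ≠ n → (inner ℝ (v m) (v n) : ℝ) = 0)
    (σ : ℕ → ℝ≥0)
    (hgauss : ∀ n, Measure.map (ξ n) (volume : Measure Ω) = gaussianReal 0 (σ n)) :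
    (∀ᵐ ω ∂(volume : Measure Ω), ∃ L : H,
        Tendsto (fun N : ℕ => ∑ n ∈ Finset.range N, ξ n ω • v n) atTop (𝓝 L)) ↔
      Summable (fun n : ℕ => (σ n : ℝ) * ‖v n‖ ^ 2) := by
  have hiff : (∀ᵐ ω ∂(volume : Measure Ω), ∃ L : H,
        Tendsto (fun N : ℕ => ∑ n ∈ Finset.range N, ξ n ω • v n) atTop (𝓝 L)) ↔
      (∀ᵐ ω ∂(volume : Measure Ω), Summable fun n => (ξ n ω) ^ 2 * ‖v n‖ ^ 2) :=
    eventually_congr (Eventually.of_forall fun ω => aux_conv_iff v horth (fun n => ξ n ω))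
  rw [hiff]
  constructor
  · -- hard direction
    intro hae
    set c : ℕ → ℝ := fun n => ‖v n‖ ^ 2 with hcdef
    have hcnn : ∀ n, 0 ≤ c n := fun n => sq_nonneg _
    set f : ℕ → Ω → ℝ := fun n ω => Real.exp (-(c n * (ξ n ω) ^ 2)) with hfdef
    have hgmeas : ∀ n, Measurable (fun x : ℝ => Real.exp (-(c n * x ^ 2))) := fun n =>
      ((measurable_const.mul (measurable_id.pow_const 2)).neg).exp
    have hfmeas : ∀ n, Measurable (f n) := fun n => (hgmeas n).comp (hmeas n)
    have hfnn : ∀ n ω, 0 ≤ f n ω := fun n ω => (Real.exp_pos _).le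
    have hfle1 : ∀ n ω, f n ω ≤ 1 := fun n ω =>
      Real.exp_le_one_iff.2 (neg_nonpos.2 (by positivity))
    have hindf : iIndepFun f (volume : Measure Ω) :=
      hindep.comp (fun n x => Real.exp (-(c n * x ^ 2))) hgmeas
    have hfint : ∀ n, Integrable (f n) (volume : Measure Ω) := fun n =>
      aux_integrable _ (hfmeas n) (C := 1) fun ω => by
        rw [abs_of_nonneg (hfnn n ω)]; exact hfle1 n ω
    have hPmeas : ∀ N : ℕ, Measurable (fun ω => ∏ n ∈ Finset.range N, f n ω) := fun N =>
      Finset.measurable_prod _ (fun i _ => hfmeas i)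
    have hPle1 : ∀ N ω, ∏ n ∈ Finset.range N, f n ω ≤ 1 := fun N ω =>
      Finset.prod_le_one (fun i _ => hfnn i ω) (fun i _ => hfle1 i ω)
    have hPnn : ∀ N ω, 0 ≤ ∏ n ∈ Finset.range N, f n ω := fun N ω =>
      Finset.prod_nonneg fun i _ => hfnn i ω
    have hPint : ∀ N, Integrable (fun ω => ∏ n ∈ Finset.range N, f n ω) (volume : Measure Ω) :=
      fun N => aux_integrable _ (hPmeas N) (C := 1) fun ω => by
        rw [abs_of_nonneg (hPnn N ω)]; exact hPle1 N ω
    -- product formula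
    have hprod : ∀ N : ℕ, ∫ ω, ∏ n ∈ Finset.range N, f n ω
        = ∏ n ∈ Finset.range N, ∫ ω, f n ω := by
      intro N
      induction N with
      | zero => simp
      | succ N ih =>
        have hind := hindf.indepFun_prod_range_succ hfmeas N
        have hXm : Measurable (∏ j ∈ Finset.range N, f j) := by
          simpa [Finset.prod_fn] using hPmeas N
        have h := IndepFun.integral_mul_eq_mul_integral hind
          hXm.aestronglyMeasurable (hfmeas N).aestronglyMeasurable
        calc ∫ ω, ∏ n ∈ Finset.range (N + 1), f n ω
            = ∫ ω, ((∏ n ∈ Finset.range N, f n) * f N) ω := by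
              simp [Finset.prod_apply, Finset.prod_range_succ]
          _ = (∫ ω, (∏ n ∈ Finset.range N, f n) ω) * ∫ ω, f N ω := h
          _ = ∏ n ∈ Finset.range (N + 1), ∫ ω, f n ω := by
              simp only [Finset.prod_apply, Finset.prod_range_succ, ← ih]
    -- upper bound on each factor
    have hEb : ∀ n, ∫ ω, f n ω
        ≤ Real.exp (-(auxκ * min ((σ n : ℝ) * c n) 1)) := by
      intro n
      have hmap : ∫ ω, f n ω = ∫ x, Real.exp (-(c n * x ^ 2)) ∂(gaussianReal 0 (σ n)) := by
        rw [← hgauss n, integral_map (hmeas n).aemeasurable (hgmeas n).aestronglyMeasurable]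
      rw [hmap, mul_comm ((σ n : ℝ)) (c n)]
      exact aux_moment (hcnn n) (σ n)
    -- lower bound δ
    set Sen : Ω → ℝ≥0∞ := fun ω => ∑' n, ENNReal.ofReal (c n * (ξ n ω) ^ 2) with hSen
    have hSmeas : Measurable Sen :=
      Measurable.ennreal_tsum fun n =>
        ((measurable_const.mul ((hmeas n).pow_const 2)).ennreal_ofReal)
    have hSfin : ∀ᵐ ω ∂(volume : Measure Ω), Sen ω < ⊤ := by
      filter_upwards [hae] with ω hω
      have hsum : Summable fun n => c n * (ξ n ω) ^ 2 :=
        hω.congr fun n => mul_comm _ _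
      rw [hSen]
      simp only
      rw [← ENNReal.ofReal_tsum_of_nonneg (fun n => by positivity) hsum]
      exact ENNReal.ofReal_lt_top
    have hAmeas : ∀ k : ℕ, MeasurableSet {ω | Sen ω ≤ (k : ℝ≥0∞)} := fun k =>
      measurableSet_le hSmeas measurable_const
    have hUnion : (volume : Measure Ω) (⋃ k : ℕ, {ω | Sen ω ≤ (k : ℝ≥0∞)}) = 1 := by
      rw [← prob_compl_eq_zero_iff (MeasurableSet.iUnion hAmeas)]
      refine measure_mono_null ?_ (ae_iff.1 hSfin)
      intro ω hω
      simp only [Set.mem_compl_iff, Set.mem_iUnion, not_exists, Set.mem_setOf_eq] at hω ⊢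
      intro hlt
      obtain ⟨k, hk⟩ := ENNReal.exists_nat_gt hlt.ne
      exact hω k hk.le
    have hmono : Monotone fun k : ℕ => {ω | Sen ω ≤ (k : ℝ≥0∞)} := by
      intro i j hij ω hω
      simp only [Set.mem_setOf_eq] at hω ⊢
      exact le_trans hω (Nat.cast_le.2 hij)
    have htend := tendsto_measure_iUnion_atTop (μ := (volume : Measure Ω)) hmono
    rw [hUnion] at htend
    have hhalf : ∀ᶠ k : ℕ in atTop,
        (1 : ℝ≥0∞) / 2 < (volume : Measure Ω) {ω | Sen ω ≤ (k : ℝ≥0∞)} :=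
      (tendsto_order.1 htend).1 _ (by norm_num)
    obtain ⟨k, hk⟩ := hhalf.exists
    set A := {ω | Sen ω ≤ (k : ℝ≥0∞)} with hA
    set δ : ℝ := Real.exp (-(k : ℝ)) * 2⁻¹ with hδ
    have hδpos : 0 < δ := by positivity
    have hLB : ∀ N : ℕ, δ ≤ ∏ n ∈ Finset.range N, ∫ ω, f n ω := by
      intro N
      rw [← hprod N]
      have hbound : ∀ ω ∈ A, Real.exp (-(k : ℝ)) ≤ ∏ n ∈ Finset.range N, f n ω := by
        intro ω hω
        have hsum_le : ∑ n ∈ Finset.range N, c n * (ξ n ω) ^ 2 ≤ (k : ℝ) := by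
          have h1 : ENNReal.ofReal (∑ n ∈ Finset.range N, c n * (ξ n ω) ^ 2)
              = ∑ n ∈ Finset.range N, ENNReal.ofReal (c n * (ξ n ω) ^ 2) :=
            ENNReal.ofReal_sum_of_nonneg fun i _ => by positivity
          have h2 : (∑ n ∈ Finset.range N, ENNReal.ofReal (c n * (ξ n ω) ^ 2)) ≤ Sen ω :=
            ENNReal.sum_le_tsum _
          have h3 : Sen ω ≤ (k : ℝ≥0∞) := hω
          have h4 : ENNReal.ofReal (∑ n ∈ Finset.range N, c n * (ξ n ω) ^ 2)
              ≤ ENNReal.ofReal (k : ℝ) := by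
            rw [h1, ENNReal.ofReal_natCast]
            exact h2.trans h3
          exact (ENNReal.ofReal_le_ofReal_iff (Nat.cast_nonneg k)).1 h4
        have hprodeq : ∏ n ∈ Finset.range N, f n ω
            = Real.exp (-(∑ n ∈ Finset.range N, c n * (ξ n ω) ^ 2)) := by
          rw [← Finset.sum_neg_distrib, Real.exp_sum]
        rw [hprodeq]
        exact Real.exp_le_exp.2 (neg_le_neg hsum_le)
      have hstep1 : Real.exp (-(k : ℝ)) * ((volume : Measure Ω) A).toReal
          ≤ ∫ ω in A, ∏ n ∈ Finset.range N, f n ω :=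
        setIntegral_ge_of_const_le_real (hAmeas k) (measure_ne_top _ _) hbound
          ((hPint N).integrableOn)
      have hstep2 : ∫ ω in A, ∏ n ∈ Finset.range N, f n ω
          ≤ ∫ ω, ∏ n ∈ Finset.range N, f n ω :=
        setIntegral_le_integral (hPint N) (Eventually.of_forall fun ω => hPnn N ω)
      have hstep0 : (2⁻¹ : ℝ) ≤ ((volume : Measure Ω) A).toReal := by
        have := ENNReal.toReal_mono (measure_ne_top _ _) hk.le
        simpa using this
      calc δ ≤ Real.exp (-(k : ℝ)) * ((volume : Measure Ω) A).toReal := by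
            rw [hδ]
            exact mul_le_mul_of_nonneg_left hstep0 (Real.exp_pos _).le
        _ ≤ ∫ ω in A, ∏ n ∈ Finset.range N, f n ω := hstep1
        _ ≤ _ := hstep2
    -- combine: partial sums of min are bounded
    have hsum_bdd : ∀ N : ℕ, ∑ n ∈ Finset.range N, min ((σ n : ℝ) * c n) 1
        ≤ -Real.log δ / auxκ := by
      intro N
      have h1 : δ ≤ Real.exp (-(auxκ * ∑ n ∈ Finset.range N, min ((σ n : ℝ) * c n) 1)) := by
        calc δ ≤ ∏ n ∈ Finset.range N, ∫ ω, f n ω := hLB N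
          _ ≤ ∏ n ∈ Finset.range N, Real.exp (-(auxκ * min ((σ n : ℝ) * c n) 1)) :=
            Finset.prod_le_prod (fun i _ => integral_nonneg fun ω => hfnn i ω)
              (fun i _ => hEb i)
          _ = Real.exp (∑ n ∈ Finset.range N, -(auxκ * min ((σ n : ℝ) * c n) 1)) :=
            (Real.exp_sum _ _).symm
          _ = Real.exp (-(auxκ * ∑ n ∈ Finset.range N, min ((σ n : ℝ) * c n) 1)) := by
            congr 1
            rw [Finset.mul_sum, ← Finset.sum_neg_distrib]
      have h2 : Real.log δ ≤ -(auxκ * ∑ n ∈ Finset.range N, min ((σ n : ℝ) * c n) 1) := by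
        have h1' : Real.exp (Real.log δ)
            ≤ Real.exp (-(auxκ * ∑ n ∈ Finset.range N, min ((σ n : ℝ) * c n) 1)) := by
          rw [Real.exp_log hδpos]; exact h1
        exact Real.exp_le_exp.1 h1'
      rw [le_div_iff₀ auxκ_pos]
      nlinarith [h2]
    have hgsum : Summable fun n => min ((σ n : ℝ) * c n) 1 :=
      summable_of_sum_range_le
        (fun n => le_min (by positivity) one_pos.le) hsum_bdd
    -- conclude summability
    have htend0 := hgsum.tendsto_atTop_zero
    have hev : ∀ᶠ n in atTop, min ((σ n : ℝ) * c n) 1 < 1 :=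
      htend0.eventually_lt_const one_pos
    obtain ⟨N, hN⟩ := eventually_atTop.1 hev
    have heq : ∀ n, N ≤ n → (σ n : ℝ) * c n = min ((σ n : ℝ) * c n) 1 := by
      intro n hn
      rcases le_or_gt ((σ n : ℝ) * c n) 1 with h | h
      · rw [min_eq_left h]
      · exfalso
        have := hN n hn
        rw [min_eq_right h.le] at this
        exact lt_irrefl _ this
    refine (summable_nat_add_iff N).1 ?_
    refine Summable.congr ((summable_nat_add_iff N).2 hgsum) fun n => ?_
    exact (heq (n + N) (Nat.le_add_left N n)).symm
  · -- easy direction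
    intro hsum
    have hterm : ∀ n, ∫⁻ ω, ENNReal.ofReal ((ξ n ω) ^ 2 * ‖v n‖ ^ 2)
        = ENNReal.ofReal ((σ n : ℝ)) * auxJ * ENNReal.ofReal (‖v n‖ ^ 2) := by
      intro n
      have h1 : ∀ ω, ENNReal.ofReal ((ξ n ω) ^ 2 * ‖v n‖ ^ 2)
          = ENNReal.ofReal ((ξ n ω) ^ 2) * ENNReal.ofReal (‖v n‖ ^ 2) := fun ω =>
        ENNReal.ofReal_mul (sq_nonneg _)
      simp only [h1]
      rw [lintegral_mul_const _ ((hmeas n).pow_const 2).ennreal_ofReal]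
      congr 1
      have h2 : ∫⁻ ω, ENNReal.ofReal ((ξ n ω) ^ 2)
          = ∫⁻ x, ENNReal.ofReal (x ^ 2) ∂(Measure.map (ξ n) (volume : Measure Ω)) := by
        rw [lintegral_map aux_hm (hmeas n)]
      rw [h2, hgauss n, aux_lintegral_sq]
    have hlint : ∫⁻ ω, ∑' n, ENNReal.ofReal ((ξ n ω) ^ 2 * ‖v n‖ ^ 2) ≠ ⊤ := by
      rw [lintegral_tsum fun n =>
        (((hmeas n).pow_const 2).mul_const _).ennreal_ofReal.aemeasurable]
      simp only [hterm]
      have hrw : ∀ n, ENNReal.ofReal ((σ n : ℝ)) * auxJ * ENNReal.ofReal (‖v n‖ ^ 2)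
          = ENNReal.ofReal ((σ n : ℝ) * ‖v n‖ ^ 2) * auxJ := by
        intro n
        rw [ENNReal.ofReal_mul (σ n).coe_nonneg]
        ring
      simp only [hrw]
      rw [ENNReal.tsum_mul_right]
      refine ENNReal.mul_ne_top ?_ auxJ_lt_top.ne
      rw [← ENNReal.ofReal_tsum_of_nonneg (fun n => by positivity) hsum]
      exact ENNReal.ofReal_ne_top
    have hae := ae_lt_top (Measurable.ennreal_tsum fun n =>
      (((hmeas n).pow_const 2).mul_const _).ennreal_ofReal) hlint
    filter_upwards [hae] with ω hω
    have hsummable := ENNReal.summable_toReal hω.ne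
    refine hsummable.congr fun n => ?_
    rw [ENNReal.toReal_ofReal (by positivity)]
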